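/- arXiv:1309.4481 — 3 statements merged into one kernel-verified Lean document; each statement's English description precedes it below -/
import Mathlib

section
/- If T is a polygonal 2-tree with n vertices, e edges, and m chordless cycles, then e = n + m − 1. In particular, the number of polygons of a polygonal 2-tree is independent of the construction sequence used to build it. -/
open SimpleGraph

/-- The graph obtained from `G` by adding a path of `m` new vertices `w_0, …, w_{m-1}`
together with the edges `{u, w_0}`, `{w_i, w_{i+1}}` for `i + 1 < m`, and `{w_{m-1}, v}`,
thereby creating a new cycle of length `m + 2` through the edge `{u, v}`. -/
def SimpleGraph.pathExtend {V : Type} (G : SimpleGraph V) (u v : V) (m : ℕ) :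
    SimpleGraph (V ⊕ Fin m) :=
  SimpleGraph.fromRel (fun a b =>
    (∃ x y : V, a = Sum.inl x ∧ b = Sum.inl y ∧ G.Adj x y) ∨
    (∃ i : Fin m, a = Sum.inl u ∧ b = Sum.inr i ∧ i.val = 0) ∨
    (∃ i j : Fin m, a = Sum.inr i ∧ b = Sum.inr j ∧ j.val = i.val + 1) ∨
    (∃ i : Fin m, a = Sum.inr i ∧ b = Sum.inl v ∧ i.val = m - 1))

/-- A polygonal 2-tree: any cycle graph on `k ≥ 3` vertices is a polygonal 2-tree, and
any graph obtained from a polygonal 2-tree by adding a path of `m ≥ 1` new vertices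
whose ends are joined to the two endpoints of an existing edge (creating a new cycle
of length `m + 2` through that edge) is again a polygonal 2-tree (up to isomorphism). -/
inductive SimpleGraph.IsPolygonal2Tree : {V : Type} → SimpleGraph V → Prop
  | cycle {V : Type} {G : SimpleGraph V} {k : ℕ} (hk : 3 ≤ k)
      (iso : Nonempty (G ≃g SimpleGraph.cycleGraph k)) : G.IsPolygonal2Tree
  | extend {V : Type} {G : SimpleGraph V} {u v : V} (huv : G.Adj u v)
      {m : ℕ} (hm : 1 ≤ m) {W : Type} {H : SimpleGraph W}
      (iso : Nonempty (H ≃g G.pathExtend u v m)) :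
      G.IsPolygonal2Tree → H.IsPolygonal2Tree

/-- A chordless cycle of `G`, identified with its vertex set `s`: the subgraph of `G`
induced on `s` is a cycle graph on at least three vertices (so in particular no two
non-consecutive vertices of the cycle are adjacent in `G`). -/
def SimpleGraph.IsChordlessCycle {V : Type} (G : SimpleGraph V) (s : Set V) : Prop :=
  3 ≤ Nat.card s ∧ Nonempty (G.induce s ≃g SimpleGraph.cycleGraph (Nat.card s))

/-! ### Auxiliary material -/

open Sum

namespace SimpleGraph

section IsoInvariance

variable {V W : Type} {G : SimpleGraph V} {H : SimpleGraph W}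

/-- Transport an induced subgraph along an isomorphism. -/
def Iso.induceImage (e : G ≃g H) (s : Set V) : G.induce s ≃g H.induce (⇑e '' s) where
  toEquiv := e.toEquiv.image s
  map_rel_iff' := by
    rintro ⟨a, ha⟩ ⟨b, hb⟩
    simpa [Equiv.image, comap_adj] using e.map_adj_iff

theorem IsChordlessCycle.image (e : G ≃g H) {s : Set V} (hs : G.IsChordlessCycle s) :
    H.IsChordlessCycle (⇑e '' s) := by
  obtain ⟨h3, ⟨iso⟩⟩ := hs
  have hc : Nat.card (⇑e '' s) = Nat.card s :=
    Nat.card_image_of_injective e.injective _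
  exact ⟨by rwa [hc], ⟨hc ▸ ((e.induceImage s).symm.trans iso)⟩⟩

theorem card_chordlessCycle_congr (e : G ≃g H) :
    Nat.card {s : Set V // G.IsChordlessCycle s}
      = Nat.card {t : Set W // H.IsChordlessCycle t} := by
  refine Nat.card_congr (Equiv.subtypeEquiv (Equiv.Set.congr e.toEquiv) fun s => ?_)
  constructor
  · exact fun h => h.image e
  · intro h
    rw [Equiv.Set.congr_apply] at h
    have := h.image e.symm
    rwa [← Set.image_comp,
      show (⇑e.symm ∘ ⇑e.toEquiv) = id from funext (by simp), Set.image_id] at this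

theorem mem_of_closed {K : Set V} (hcl : ∀ a b, a ∈ K → G.Adj a b → b ∈ K) :
    ∀ {a b : V}, G.Walk a b → a ∈ K → b ∈ K := by
  intro a b w
  induction w with
  | nil => exact id
  | cons h p ih => exact fun ha => ih (hcl _ _ ha h)

theorem eq_univ_of_closed (hp : G.Preconnected) {K : Set V}
    (hcl : ∀ a b, a ∈ K → G.Adj a b → b ∈ K) {a : V} (ha : a ∈ K) (b : V) : b ∈ K := by
  obtain ⟨w⟩ := hp a b
  exact mem_of_closed hcl w ha

theorem exists_two_neighbors {n : ℕ} (hn : 3 ≤ n) (e : G ≃g cycleGraph n) (a : V) :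
    ∃ b c, b ≠ c ∧ G.Adj a b ∧ G.Adj a c := by
  obtain ⟨m, rfl⟩ : ∃ m, n = m + 2 := ⟨n - 2, by omega⟩
  refine ⟨e.symm (e a - 1), e.symm (e a + 1), ?_, ?_, ?_⟩
  · intro hEq
    have h2 : e a - 1 = e a + 1 := e.symm.injective hEq
    have h0 : (2 : Fin (m + 2)) = 0 := by open Fin.CommRing in linear_combination -h2
    have hv := congrArg Fin.val h0
    have hval : (2 : Fin (m + 2)).val = 2 % (m + 2) := rfl
    rw [hval, Nat.mod_eq_of_lt (by omega)] at hv
    simp at hv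
  · have : (cycleGraph (m + 2)).Adj (e a) (e a - 1) := by
      rw [cycleGraph_adj]; left; simp
    simpa using e.symm.map_adj_iff.mpr this
  · have : (cycleGraph (m + 2)).Adj (e a) (e a + 1) := by
      rw [cycleGraph_adj]; right; simp
    simpa using e.symm.map_adj_iff.mpr this

theorem not_three_neighbors {n : ℕ} (e : G ≃g cycleGraph n) (hn : 3 ≤ n) {a b c d : V}
    (hb : G.Adj a b) (hc : G.Adj a c) (hd : G.Adj a d)
    (hbc : b ≠ c) (hbd : b ≠ d) (hcd : c ≠ d) : False := by
  obtain ⟨m, rfl⟩ : ∃ m, n = m + 2 := ⟨n - 2, by omega⟩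
  have key : ∀ x : V, G.Adj a x → e x = e a - 1 ∨ e x = e a + 1 := by
    intro x hx
    have h1 : (cycleGraph (m + 2)).Adj (e a) (e x) := e.map_adj_iff.mpr hx
    have h2 : e x ∈ (cycleGraph (m + 2)).neighborSet (e a) := h1
    rw [cycleGraph_neighborSet] at h2
    simpa using h2
  have inj := e.injective
  rcases key b hb with h1 | h1 <;> rcases key c hc with h2 | h2 <;>
    rcases key d hd with h3 | h3 <;>
    first
      | exact hbc (inj (h1.trans h2.symm))
      | exact hbd (inj (h1.trans h3.symm))
      | exact hcd (inj (h2.trans h3.symm))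

end IsoInvariance

section ChordlessBasics

variable {V : Type} {G : SimpleGraph V}

/-- In a chordless cycle, every vertex has two distinct neighbours inside the cycle. -/
theorem IsChordlessCycle.two_nbrs {s : Set V} (hs : G.IsChordlessCycle s) {x : V}
    (hx : x ∈ s) : ∃ b c : V, b ∈ s ∧ c ∈ s ∧ b ≠ c ∧ G.Adj x b ∧ G.Adj x c := by
  obtain ⟨h3, ⟨iso⟩⟩ := hs
  obtain ⟨b, c, hbc, hb, hc⟩ := exists_two_neighbors h3 iso ⟨x, hx⟩
  exact ⟨b.1, c.1, b.2, c.2, fun h => hbc (Subtype.ext h), hb, hc⟩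

/-- In a chordless cycle, no vertex has three distinct neighbours inside the cycle. -/
theorem IsChordlessCycle.not_three_nbrs {s : Set V} (hs : G.IsChordlessCycle s) {x b c d : V}
    (hx : x ∈ s) (hb : b ∈ s) (hc : c ∈ s) (hd : d ∈ s)
    (hab : G.Adj x b) (hac : G.Adj x c) (had : G.Adj x d)
    (hbc : b ≠ c) (hbd : b ≠ d) (hcd : c ≠ d) : False := by
  obtain ⟨h3, ⟨iso⟩⟩ := hs
  exact not_three_neighbors iso h3 (a := ⟨x, hx⟩) (b := ⟨b, hb⟩) (c := ⟨c, hc⟩) (d := ⟨d, hd⟩)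
    hab hac had (fun h => hbc (congrArg Subtype.val h)) (fun h => hbd (congrArg Subtype.val h))
    (fun h => hcd (congrArg Subtype.val h))

theorem IsChordlessCycle.nonempty {s : Set V} (hs : G.IsChordlessCycle s) : s.Nonempty := by
  have h3 := hs.1
  rcases Set.eq_empty_or_nonempty s with rfl | h
  · simp at h3
  · exact h

theorem IsChordlessCycle.preconnected {s : Set V} (hs : G.IsChordlessCycle s) :
    (G.induce s).Preconnected :=
  hs.2.some.preconnected_iff.mpr cycleGraph_preconnected

end ChordlessBasics

section BaseCase

theorem card_edgeSet_cycleGraph {n : ℕ} (hn : 3 ≤ n) :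
    Nat.card (cycleGraph n).edgeSet = n := by
  obtain ⟨m, rfl⟩ : ∃ m, n = m + 3 := ⟨n - 3, by omega⟩
  have hs := (cycleGraph (m + 3)).sum_degrees_eq_twice_card_edges
  simp only [cycleGraph_degree_three_le, Finset.sum_const, Finset.card_univ,
    Fintype.card_fin, smul_eq_mul] at hs
  have : Nat.card (cycleGraph (m + 3)).edgeSet = (cycleGraph (m + 3)).edgeFinset.card := by
    rw [Nat.card_coe_set_eq, Set.ncard_eq_toFinset_card']
    congr 1
  omega

theorem isChordlessCycle_univ_cycleGraph {n : ℕ} (hn : 3 ≤ n) :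
    (cycleGraph n).IsChordlessCycle Set.univ := by
  have hcard : Nat.card (Set.univ : Set (Fin n)) = n := by
    rw [Nat.card_coe_set_eq, Set.ncard_univ, Nat.card_eq_fintype_card, Fintype.card_fin]
  refine ⟨by rwa [hcard], ⟨?_⟩⟩
  rw [hcard]
  exact induceUnivIso _

theorem isChordlessCycle_cycleGraph_eq_univ {n : ℕ} (hn : 3 ≤ n) {s : Set (Fin n)}
    (hs : (cycleGraph n).IsChordlessCycle s) : s = Set.univ := by
  have hcl : ∀ a b : Fin n, a ∈ s → (cycleGraph n).Adj a b → b ∈ s := by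
    intro a b ha hab
    by_contra hb
    obtain ⟨x, y, hxs, hys, hxy, hax, hay⟩ := hs.two_nbrs ha
    exact not_three_neighbors (Iso.refl) hn hax hay hab hxy
      (fun h => hb (h ▸ hxs)) (fun h => hb (h ▸ hys))
  obtain ⟨a, ha⟩ := hs.nonempty
  exact Set.eq_univ_of_forall (eq_univ_of_closed cycleGraph_preconnected hcl ha)

theorem card_chordlessCycle_cycleGraph {n : ℕ} (hn : 3 ≤ n) :
    Nat.card {s : Set (Fin n) // (cycleGraph n).IsChordlessCycle s} = 1 := by
  haveI : Unique {s : Set (Fin n) // (cycleGraph n).IsChordlessCycle s} :=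
    { default := ⟨Set.univ, isChordlessCycle_univ_cycleGraph hn⟩
      uniq := fun ⟨s, hs⟩ => Subtype.ext (isChordlessCycle_cycleGraph_eq_univ hn hs) }
  exact Nat.card_unique

end BaseCase

section PathExtend

variable {V : Type} {G : SimpleGraph V} {u v : V} {p : ℕ}

theorem pathExtend_adj_inl_inl {x y : V} :
    (G.pathExtend u v p).Adj (inl x) (inl y) ↔ G.Adj x y := by
  rw [pathExtend, fromRel_adj]
  constructor
  · rintro ⟨-, h | h⟩ <;> simp_all [adj_comm]
  · intro h
    exact ⟨by simpa using h.ne, Or.inl (Or.inl ⟨x, y, rfl, rfl, h⟩)⟩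

theorem pathExtend_adj_inl_inr {x : V} {i : Fin p} :
    (G.pathExtend u v p).Adj (inl x) (inr i) ↔
      (x = u ∧ i.val = 0) ∨ (x = v ∧ i.val = p - 1) := by
  rw [pathExtend, fromRel_adj]
  constructor
  · rintro ⟨-, h | h⟩ <;> simp_all
  · rintro (⟨rfl, h0⟩ | ⟨rfl, h1⟩)
    · exact ⟨by simp, Or.inl (Or.inr (Or.inl ⟨i, rfl, rfl, h0⟩))⟩
    · exact ⟨by simp, Or.inr (Or.inr (Or.inr (Or.inr ⟨i, rfl, rfl, h1⟩)))⟩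

theorem pathExtend_adj_inr_inr {i j : Fin p} :
    (G.pathExtend u v p).Adj (inr i) (inr j) ↔
      j.val = i.val + 1 ∨ i.val = j.val + 1 := by
  rw [pathExtend, fromRel_adj]
  constructor
  · rintro ⟨-, h | h⟩ <;> simp_all
  · rintro (h | h)
    · exact ⟨by simp [Fin.ext_iff]; omega, Or.inl (Or.inr (Or.inr (Or.inl ⟨i, j, rfl, rfl, h⟩)))⟩
    · exact ⟨by simp [Fin.ext_iff]; omega, Or.inr (Or.inr (Or.inr (Or.inl ⟨j, i, rfl, rfl, h⟩)))⟩

theorem pathExtend_adj_inr_inl {i : Fin p} {x : V} :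
    (G.pathExtend u v p).Adj (inr i) (inl x) ↔
      (x = u ∧ i.val = 0) ∨ (x = v ∧ i.val = p - 1) := by
  rw [adj_comm, pathExtend_adj_inl_inr]

theorem cycleGraph_adj_val {n : ℕ} {i j : Fin (n + 2)} :
    (cycleGraph (n + 2)).Adj i j ↔
      (j.val = i.val + 1 ∨ i.val = j.val + 1) ∨
        (i.val = 0 ∧ j.val = n + 1) ∨ (j.val = 0 ∧ i.val = n + 1) := by
  have hi := i.isLt
  have hj := j.isLt
  rw [cycleGraph_adj, Fin.ext_iff, Fin.ext_iff, Fin.sub_def, Fin.sub_def]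
  show ((n + 2) - j.val + i.val) % (n + 2) = 1 ∨ ((n + 2) - i.val + j.val) % (n + 2) = 1 ↔ _
  rcases Nat.lt_or_ge ((n + 2) - j.val + i.val) (n + 2) with h1 | h1 <;>
    rcases Nat.lt_or_ge ((n + 2) - i.val + j.val) (n + 2) with h2 | h2 <;>
    [rw [Nat.mod_eq_of_lt h1, Nat.mod_eq_of_lt h2];
     rw [Nat.mod_eq_of_lt h1, Nat.mod_eq_sub_mod h2, Nat.mod_eq_of_lt (by omega)];
     rw [Nat.mod_eq_sub_mod h1, Nat.mod_eq_of_lt (by omega), Nat.mod_eq_of_lt h2];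
     rw [Nat.mod_eq_sub_mod h1, Nat.mod_eq_of_lt (by omega), Nat.mod_eq_sub_mod h2,
       Nat.mod_eq_of_lt (by omega)]] <;>
    omega

/-- The vertices of the new polygon, in cyclic order. -/
def extPt (u v : V) (p : ℕ) (j : Fin (p + 2)) : V ⊕ Fin p :=
  if h0 : j.val = 0 then inl u
  else if h1 : j.val = p + 1 then inl v
  else inr ⟨j.val - 1, by have := j.isLt; omega⟩

theorem extPt_injective (huv : u ≠ v) : Function.Injective (extPt u v p) := by
  intro a b hab
  have ha := a.isLt
  have hb := b.isLt
  unfold extPt at hab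
  split_ifs at hab <;>
    simp only [inl.injEq, inr.injEq, Fin.mk.injEq, reduceCtorEq] at hab <;>
    first
      | exact absurd hab huv
      | exact absurd hab.symm huv
      | exact Fin.ext (by omega)

theorem extPt_adj (hG : G.Adj u v) {i j : Fin (p + 2)} :
    (G.pathExtend u v p).Adj (extPt u v p i) (extPt u v p j) ↔
      (cycleGraph (p + 2)).Adj i j := by
  have hne : u ≠ v := hG.ne
  have hi := i.isLt
  have hj := j.isLt
  rw [cycleGraph_adj_val]
  unfold extPt
  split_ifs <;>
    simp only [pathExtend_adj_inl_inl, pathExtend_adj_inl_inr, pathExtend_adj_inr_inl,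
      pathExtend_adj_inr_inr, hG, hG.symm, hne, Ne.symm hne, SimpleGraph.irrefl,
      inl.injEq, inr.injEq, Fin.ext_iff, true_and, false_and, and_false, and_true,
      false_or, or_false, iff_true, true_iff, not_false_iff] <;>
    (try rw [false_iff]) <;> omega

theorem extPt_eq_inl_u {j : Fin (p + 2)} (h : j.val = 0) : extPt u v p j = inl u := by
  unfold extPt
  split_ifs <;> first | rfl | omega

theorem extPt_eq_inl_v {j : Fin (p + 2)} (h : j.val = p + 1) : extPt u v p j = inl v := by
  unfold extPt
  split_ifs <;> first | rfl | omega

theorem extPt_eq_inr {j : Fin (p + 2)} (h1 : 1 ≤ j.val) (h2 : j.val ≤ p) :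
    extPt u v p j = inr ⟨j.val - 1, by have := j.isLt; omega⟩ := by
  unfold extPt
  split_ifs <;> first | rfl | omega

theorem inl_u_mem_range : inl u ∈ Set.range (extPt u v p) :=
  ⟨⟨0, by omega⟩, extPt_eq_inl_u rfl⟩

theorem inl_v_mem_range : inl v ∈ Set.range (extPt u v p) :=
  ⟨⟨p + 1, by omega⟩, extPt_eq_inl_v rfl⟩

theorem inr_mem_range (i : Fin p) : inr i ∈ Set.range (extPt u v p) := by
  have hi := i.isLt
  refine ⟨⟨i.val + 1, by omega⟩, ?_⟩
  rw [extPt_eq_inr (by first | rfl | omega | (dsimp only; omega)) (by first | rfl | omega | (dsimp only; omega))]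
  exact congrArg inr (Fin.ext (by first | rfl | omega | (dsimp only; omega)))

theorem eq_u_or_v_of_inl_mem {x : V} (h : inl x ∈ Set.range (extPt u v p)) :
    x = u ∨ x = v := by
  obtain ⟨j, hj⟩ := h
  unfold extPt at hj
  split_ifs at hj <;> simp_all

theorem isChordlessCycle_range_extPt (hG : G.Adj u v) (hp : 1 ≤ p) :
    (G.pathExtend u v p).IsChordlessCycle (Set.range (extPt u v p)) := by
  have hinj := extPt_injective (p := p) hG.ne
  have hcard : Nat.card (Set.range (extPt u v p)) = p + 2 := by
    rw [Nat.card_congr (Equiv.ofInjective _ hinj).symm, Nat.card_eq_fintype_card,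
      Fintype.card_fin]
  refine ⟨by omega, ⟨?_⟩⟩
  rw [hcard]
  exact
    ({ toEquiv := Equiv.ofInjective _ hinj
       map_rel_iff' := by
         intro i j
         exact extPt_adj hG } : cycleGraph (p + 2) ≃g _).symm

/-- The lower neighbour of the path vertex `w_i`. -/
def nbrA (u : V) {p : ℕ} (i : Fin p) : V ⊕ Fin p :=
  if h : i.val = 0 then inl u else inr ⟨i.val - 1, by have := i.isLt; omega⟩

/-- The upper neighbour of the path vertex `w_i`. -/
def nbrB (v : V) {p : ℕ} (i : Fin p) : V ⊕ Fin p :=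
  if h : i.val = p - 1 then inl v else inr ⟨i.val + 1, by have := i.isLt; omega⟩

theorem pathExtend_adj_inr_iff {i : Fin p} {z : V ⊕ Fin p} :
    (G.pathExtend u v p).Adj (inr i) z ↔ z = nbrA u i ∨ z = nbrB v i := by
  have hi := i.isLt
  cases z with
  | inl x =>
    rw [pathExtend_adj_inr_inl]
    unfold nbrA nbrB
    split_ifs <;> simp_all
  | inr j =>
    have hj := j.isLt
    rw [pathExtend_adj_inr_inr]
    unfold nbrA nbrB
    split_ifs <;> simp_all [Fin.ext_iff] <;> omega

theorem nbrA_mem_range {i : Fin p} : nbrA u i ∈ Set.range (extPt u v p) := by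
  unfold nbrA
  split_ifs
  · exact inl_u_mem_range
  · exact inr_mem_range _

theorem nbrB_mem_range {i : Fin p} : nbrB v i ∈ Set.range (extPt u v p) := by
  unfold nbrB
  split_ifs
  · exact inl_v_mem_range
  · exact inr_mem_range _

theorem isChordlessCycle_pathExtend_classify (hG : G.Adj u v) (hp : 1 ≤ p)
    {t : Set (V ⊕ Fin p)} (ht : (G.pathExtend u v p).IsChordlessCycle t) :
    t ⊆ Set.range inl ∨ t = Set.range (extPt u v p) := by
  by_cases hcase : ∀ z ∈ t, z ∈ Set.range (inl : V → V ⊕ Fin p)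
  · exact Or.inl hcase
  right
  push_neg at hcase
  obtain ⟨z, hz, hzr⟩ := hcase
  obtain ⟨i0, rfl⟩ : ∃ i, z = inr i := by
    cases z with
    | inl x => exact absurd ⟨_, rfl⟩ hzr
    | inr i => exact ⟨_, rfl⟩
  have hAB : ∀ i : Fin p, inr i ∈ t → nbrA u i ∈ t ∧ nbrB v i ∈ t := by
    intro i hi
    obtain ⟨b, c, hb, hc, hbc, hab, hac⟩ := ht.two_nbrs hi
    rcases pathExtend_adj_inr_iff.1 hab with rfl | rfl <;>
      rcases pathExtend_adj_inr_iff.1 hac with rfl | rfl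
    · exact absurd rfl hbc
    · exact ⟨hb, hc⟩
    · exact ⟨hc, hb⟩
    · exact absurd rfl hbc
  have hup : ∀ i : Fin p, inr i ∈ t → ∀ j : Fin p, j.val = i.val + 1 → inr j ∈ t := by
    intro i hi j hj
    have hB := (hAB i hi).2
    have hjlt := j.isLt
    unfold nbrB at hB
    split_ifs at hB with h
    · omega
    · rwa [show j = ⟨i.val + 1, by omega⟩ from Fin.ext hj]
  have hdown : ∀ i : Fin p, inr i ∈ t → ∀ j : Fin p, i.val = j.val + 1 → inr j ∈ t := by
    intro i hi j hj
    have hA := (hAB i hi).1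
    unfold nbrA at hA
    split_ifs at hA with h
    · omega
    · rwa [show j = ⟨i.val - 1, by have := i.isLt; omega⟩ from Fin.ext (by first | rfl | omega | (dsimp only; omega))]
  have hall : ∀ j : Fin p, inr j ∈ t := by
    have upward : ∀ d : ℕ, ∀ j : Fin p, j.val = i0.val + d → inr j ∈ t := by
      intro d
      induction d with
      | zero => exact fun j hj => (Fin.ext (by omega) : j = i0) ▸ hz
      | succ d ihd =>
        intro j hj
        have hlt : i0.val + d < p := by have := j.isLt; omega
        exact hup ⟨i0.val + d, hlt⟩ (ihd _ rfl) j (by first | rfl | omega | (dsimp only; omega))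
    have downward : ∀ d : ℕ, ∀ j : Fin p, j.val + d = i0.val → inr j ∈ t := by
      intro d
      induction d with
      | zero => exact fun j hj => (Fin.ext (by omega) : j = i0) ▸ hz
      | succ d ihd =>
        intro j hj
        have hlt : j.val + 1 < p := by have := i0.isLt; omega
        exact hdown ⟨j.val + 1, hlt⟩ (ihd _ (by first | rfl | omega | (dsimp only; omega))) j rfl
    intro j
    rcases Nat.le_total i0.val j.val with h | h
    · exact upward (j.val - i0.val) j (by omega)
    · exact downward (i0.val - j.val) j (by omega)
  have hu : inl u ∈ t := by
    have hA := (hAB ⟨0, by omega⟩ (hall _)).1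
    unfold nbrA at hA
    simpa using hA
  have hv : inl v ∈ t := by
    have hB := (hAB ⟨p - 1, by omega⟩ (hall _)).2
    unfold nbrB at hB
    simpa using hB
  have hNt : Set.range (extPt u v p) ⊆ t := by
    rintro z ⟨j, rfl⟩
    unfold extPt
    split_ifs
    · exact hu
    · exact hv
    · exact hall _
  have key : ∀ a b : V ⊕ Fin p, a ∈ t → b ∈ t → a ∈ Set.range (extPt u v p) →
      (G.pathExtend u v p).Adj a b → b ∈ Set.range (extPt u v p) := by
    intro a b hat hbt haN hadj
    cases a with
    | inr i =>
      rcases pathExtend_adj_inr_iff.1 hadj with rfl | rfl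
      · exact nbrA_mem_range
      · exact nbrB_mem_range
    | inl x =>
      rcases eq_u_or_v_of_inl_mem haN with rfl | rfl
      · cases b with
        | inr j => exact inr_mem_range j
        | inl y =>
          by_cases hyv : y = v
          · exact hyv ▸ inl_v_mem_range
          exact absurd (ht.not_three_nbrs hat hbt hv (hall ⟨0, by omega⟩) hadj
            (pathExtend_adj_inl_inl.2 hG)
            (pathExtend_adj_inl_inr.2 (Or.inl ⟨rfl, rfl⟩))
            (by simpa using hyv) (by simp) (by simp)) id
      · cases b with
        | inr j => exact inr_mem_range j
        | inl y =>
          by_cases hyu : y = u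
          · exact hyu ▸ inl_u_mem_range
          exact absurd (ht.not_three_nbrs hat hbt hu (hall ⟨p - 1, by omega⟩) hadj
            (pathExtend_adj_inl_inl.2 hG.symm)
            (pathExtend_adj_inl_inr.2 (Or.inr ⟨rfl, rfl⟩))
            (by simpa using hyu) (by simp) (by simp)) id
  have hsub : ∀ a ∈ t, a ∈ Set.range (extPt u v p) := by
    intro a hat
    exact eq_univ_of_closed ht.preconnected
      (K := {w : t | (w : V ⊕ Fin p) ∈ Set.range (extPt u v p)})
      (fun w₁ w₂ hw₁ hadj => key w₁ w₂ w₁.2 w₂.2 hw₁ hadj)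
      (a := ⟨inl u, hu⟩) inl_u_mem_range ⟨a, hat⟩
  exact Set.Subset.antisymm hsub hNt

/-- The induced subgraph on an `inl`-image inside a path extension. -/
noncomputable def induceInlIso (s : Set V) :
    G.induce s ≃g (G.pathExtend u v p).induce (inl '' s) where
  toEquiv := Equiv.Set.image inl s inl_injective
  map_rel_iff' := by
    rintro ⟨a, ha⟩ ⟨b, hb⟩
    exact pathExtend_adj_inl_inl

theorem icc_inl_image_iff {s : Set V} :
    G.IsChordlessCycle s ↔ (G.pathExtend u v p).IsChordlessCycle (inl '' s) := by
  have hc : Nat.card (inl '' s : Set (V ⊕ Fin p)) = Nat.card s :=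
    Nat.card_image_of_injective inl_injective _
  constructor
  · rintro ⟨h3, ⟨iso⟩⟩
    exact ⟨by rwa [hc], ⟨hc ▸ ((induceInlIso s).symm.trans iso)⟩⟩
  · rintro ⟨h3, ⟨iso⟩⟩
    refine ⟨by rwa [hc] at h3, ⟨?_⟩⟩
    rw [← hc]
    exact (induceInlIso s).trans iso

theorem card_chordless_pathExtend [Finite V] (hG : G.Adj u v) (hp : 1 ≤ p) :
    Nat.card {t : Set (V ⊕ Fin p) // (G.pathExtend u v p).IsChordlessCycle t}
      = Nat.card {s : Set V // G.IsChordlessCycle s} + 1 := by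
  have hN := isChordlessCycle_range_extPt hG hp
  have hbij : Function.Bijective
      (fun z : {s : Set V // G.IsChordlessCycle s} ⊕ Unit =>
        match z with
        | Sum.inl ⟨s, hs⟩ => (⟨Sum.inl '' s, icc_inl_image_iff.1 hs⟩ :
            {t : Set (V ⊕ Fin p) // (G.pathExtend u v p).IsChordlessCycle t})
        | Sum.inr _ => ⟨Set.range (extPt u v p), hN⟩) := by
    constructor
    · rintro (⟨s1, hs1⟩ | ⟨⟩) (⟨s2, hs2⟩ | ⟨⟩) h <;>
        simp only [Subtype.mk.injEq] at h
      · exact congrArg Sum.inl (Subtype.ext ((Set.image_injective.2 inl_injective) h))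
      · exfalso
        have hm := inr_mem_range (u := u) (v := v) (p := p) ⟨0, by omega⟩
        rw [← h] at hm
        simp at hm
      · exfalso
        have hm := inr_mem_range (u := u) (v := v) (p := p) ⟨0, by omega⟩
        rw [h] at hm
        simp at hm
      · rfl
    · rintro ⟨t, ht⟩
      rcases isChordlessCycle_pathExtend_classify hG hp ht with hsub | rfl
      · refine ⟨Sum.inl ⟨inl ⁻¹' t, ?_⟩, Subtype.ext ?_⟩
        · rw [icc_inl_image_iff (u := u) (v := v) (p := p),
            Set.image_preimage_eq_of_subset hsub]
          exact ht
        · exact Set.image_preimage_eq_of_subset hsub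
      · exact ⟨Sum.inr (), rfl⟩
  rw [← Nat.card_congr (Equiv.ofBijective _ hbij), Nat.card_sum]
  simp

theorem card_edgeSet_pathExtend [Finite V] (hG : G.Adj u v) (hp : 1 ≤ p) :
    Nat.card (G.pathExtend u v p).edgeSet = Nat.card G.edgeSet + (p + 1) := by
  classical
  have mem1 : ∀ e ∈ G.edgeSet, Sym2.map (inl : V → V ⊕ Fin p) e ∈
      (G.pathExtend u v p).edgeSet := by
    intro e he
    induction e with
    | _ x y => rw [Sym2.map_pair_eq]; exact pathExtend_adj_inl_inl.2 he
  have mem2 : ∀ i : Fin (p + 1),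
      s(extPt u v p ⟨i.val, by omega⟩, extPt u v p ⟨i.val + 1, by have := i.isLt; omega⟩) ∈
        (G.pathExtend u v p).edgeSet := by
    intro i
    rw [mem_edgeSet, extPt_adj hG, cycleGraph_adj_val]
    exact Or.inl (Or.inl rfl)
  have hbij : Function.Bijective (fun z : G.edgeSet ⊕ Fin (p + 1) =>
      match z with
      | Sum.inl e => (⟨Sym2.map inl e.1, mem1 _ e.2⟩ : (G.pathExtend u v p).edgeSet)
      | Sum.inr i => ⟨s(extPt u v p ⟨i.val, by omega⟩,
          extPt u v p ⟨i.val + 1, by have := i.isLt; omega⟩), mem2 i⟩) := by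
    have hinr : ∀ i : Fin (p + 1), ∃ j : Fin p,
        (inr j : V ⊕ Fin p) ∈ (s(extPt u v p ⟨i.val, by omega⟩,
          extPt u v p ⟨i.val + 1, by have := i.isLt; omega⟩) : Sym2 (V ⊕ Fin p)) := by
      intro i
      have hi := i.isLt
      by_cases h0 : i.val = 0
      · refine ⟨⟨0, hp⟩, ?_⟩
        rw [Sym2.mem_iff]
        right
        rw [extPt_eq_inr (by first | rfl | omega | (dsimp only; omega)) (by first | rfl | omega | (dsimp only; omega))]
        exact (congrArg inr (Fin.ext (by first | rfl | omega | (dsimp only; omega)))).symm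
      · refine ⟨⟨i.val - 1, by omega⟩, ?_⟩
        rw [Sym2.mem_iff]
        left
        rw [extPt_eq_inr (by first | rfl | omega | (dsimp only; omega)) (by first | rfl | omega | (dsimp only; omega))]
    constructor
    · rintro (⟨e1, he1⟩ | i1) (⟨e2, he2⟩ | i2) h <;>
        simp only [Subtype.mk.injEq] at h
      · exact congrArg Sum.inl (Subtype.ext (Sym2.map.injective inl_injective h))
      · obtain ⟨j, hj⟩ := hinr i2
        rw [← h, Sym2.mem_map] at hj
        obtain ⟨a, -, ha⟩ := hj
        simp at ha
      · obtain ⟨j, hj⟩ := hinr i1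
        rw [h, Sym2.mem_map] at hj
        obtain ⟨a, -, ha⟩ := hj
        simp at ha
      · have hne := hG.ne
        have h1 := i1.isLt
        have h2 := i2.isLt
        rw [Sym2.eq_iff] at h
        rcases h with ⟨ha, hb⟩ | ⟨ha, hb⟩ <;>
          [skip;
           skip] <;>
          · have ha' := extPt_injective hne ha
            have hb' := extPt_injective hne hb
            rw [Fin.mk.injEq] at ha' hb'
            exact congrArg Sum.inr (Fin.ext (by omega))
    · rintro ⟨e, he⟩
      induction e with
      | _ z w =>
        rw [mem_edgeSet] at he
        cases z with
        | inl x =>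
          cases w with
          | inl y =>
            exact ⟨Sum.inl ⟨s(x, y), pathExtend_adj_inl_inl.1 he⟩,
              Subtype.ext (Sym2.map_pair_eq _ _ _)⟩
          | inr i =>
            have hi := i.isLt
            rcases pathExtend_adj_inl_inr.1 he with ⟨rfl, h0⟩ | ⟨rfl, h1⟩
            · refine ⟨Sum.inr ⟨0, by omega⟩, Subtype.ext ?_⟩
              dsimp only
              rw [extPt_eq_inl_u rfl, extPt_eq_inr (by first | rfl | omega | (dsimp only; omega)) (by first | rfl | omega | (dsimp only; omega))]
              simp [Sym2.eq_iff, Fin.ext_iff]; try omega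
            · refine ⟨Sum.inr ⟨p, by omega⟩, Subtype.ext ?_⟩
              dsimp only
              rw [extPt_eq_inr (by first | rfl | omega | (dsimp only; omega)) (by first | rfl | omega | (dsimp only; omega)),
                extPt_eq_inl_v (by first | rfl | omega | (dsimp only; omega)), Sym2.eq_swap]
              simp [Sym2.eq_iff, Fin.ext_iff]; try omega
        | inr i =>
          have hi := i.isLt
          cases w with
          | inl x =>
            rcases pathExtend_adj_inr_inl.1 he with ⟨rfl, h0⟩ | ⟨rfl, h1⟩
            · refine ⟨Sum.inr ⟨0, by omega⟩, Subtype.ext ?_⟩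
              dsimp only
              rw [extPt_eq_inl_u rfl,
                extPt_eq_inr (by first | rfl | omega | (dsimp only; omega)) (by first | rfl | omega | (dsimp only; omega)), Sym2.eq_swap]
              simp [Sym2.eq_iff, Fin.ext_iff]; try omega
            · refine ⟨Sum.inr ⟨p, by omega⟩, Subtype.ext ?_⟩
              dsimp only
              rw [extPt_eq_inr (by first | rfl | omega | (dsimp only; omega)) (by first | rfl | omega | (dsimp only; omega)),
                extPt_eq_inl_v (by first | rfl | omega | (dsimp only; omega))]
              simp [Sym2.eq_iff, Fin.ext_iff]; try omega
          | inr j =>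
            have hj := j.isLt
            rcases pathExtend_adj_inr_inr.1 he with hij | hij
            · refine ⟨Sum.inr ⟨i.val + 1, by omega⟩, Subtype.ext ?_⟩
              dsimp only
              rw [extPt_eq_inr (by first | rfl | omega | (dsimp only; omega)) (by first | rfl | omega | (dsimp only; omega)),
                extPt_eq_inr (by first | rfl | omega | (dsimp only; omega)) (by first | rfl | omega | (dsimp only; omega))]
              simp [Sym2.eq_iff, Fin.ext_iff]; try omega
            · refine ⟨Sum.inr ⟨j.val + 1, by omega⟩, Subtype.ext ?_⟩
              dsimp only
              rw [extPt_eq_inr (by first | rfl | omega | (dsimp only; omega)) (by first | rfl | omega | (dsimp only; omega)),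
                extPt_eq_inr (by first | rfl | omega | (dsimp only; omega)) (by first | rfl | omega | (dsimp only; omega)), Sym2.eq_swap]
              simp [Sym2.eq_iff, Fin.ext_iff]; try omega
  rw [← Nat.card_congr (Equiv.ofBijective _ hbij), Nat.card_sum]
  simp

end PathExtend

theorem IsPolygonal2Tree.finite {V : Type} {G : SimpleGraph V}
    (h : G.IsPolygonal2Tree) : Finite V := by
  induction h with
  | cycle hk iso => exact Finite.of_equiv _ iso.some.toEquiv.symm
  | extend huv hm iso hG ih =>
    haveI := ih
    exact Finite.of_equiv _ iso.some.toEquiv.symm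

end SimpleGraph

/-- If `T` is a polygonal 2-tree with `n` vertices, `e` edges and `m` chordless
cycles, then `e = n + m - 1` (stated additively: `e + 1 = n + m`). -/
theorem polygonal2Tree_card_edges {V : Type} (G : SimpleGraph V)
    (h : G.IsPolygonal2Tree) :
    Nat.card G.edgeSet + 1 =
      Nat.card V + Nat.card {s : Set V // G.IsChordlessCycle s} := by
  induction h with
  | @cycle V G k hk iso =>
    obtain ⟨e⟩ := iso
    rw [Nat.card_congr e.mapEdgeSet, Nat.card_congr e.toEquiv,
      card_chordlessCycle_congr e, card_edgeSet_cycleGraph hk,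
      card_chordlessCycle_cycleGraph hk, Nat.card_eq_fintype_card, Fintype.card_fin]
  | @extend V G u v huv p hp W H iso hG ih =>
    obtain ⟨e⟩ := iso
    haveI : Finite V := hG.finite
    rw [Nat.card_congr e.mapEdgeSet, Nat.card_congr e.toEquiv,
      card_chordlessCycle_congr e, card_edgeSet_pathExtend huv hp,
      card_chordless_pathExtend huv hp, Nat.card_sum]
    simp only [Nat.card_eq_fintype_card, Fintype.card_fin]
    omega
end

section
/- A succulent is a polygonal 2-tree if and only if it is 2-connected. -/
open SimpleGraph

/-- The graph obtained from `G` by attaching a new cycle of length `m + 1` at the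
vertex `v` (identifying one vertex of the new cycle with `v`): we add `m` new vertices
`w_0, …, w_{m-1}` together with the edges `{v, w_0}`, `{w_i, w_{i+1}}`, `{w_{m-1}, v}`. -/
def SimpleGraph.vertexAttach {V : Type} (G : SimpleGraph V) (v : V) (m : ℕ) :
    SimpleGraph (V ⊕ Fin m) :=
  SimpleGraph.fromRel (fun a b =>
    (∃ x y : V, a = Sum.inl x ∧ b = Sum.inl y ∧ G.Adj x y) ∨
    (∃ i : Fin m, a = Sum.inl v ∧ b = Sum.inr i ∧ (i.val = 0 ∨ i.val = m - 1)) ∨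
    (∃ i j : Fin m, a = Sum.inr i ∧ b = Sum.inr j ∧ j.val = i.val + 1))

/-- A succulent: any cycle graph on `k ≥ 3` vertices is a succulent, and a succulent
with a new cycle of length `≥ 3` attached, either by identifying exactly one vertex of
the new cycle with an existing vertex, or by identifying exactly one edge of the new
cycle (with its endpoints) with an existing edge, is again a succulent
(up to isomorphism). -/
inductive SimpleGraph.IsSucculent : {V : Type} → SimpleGraph V → Prop
  | cycle {V : Type} {G : SimpleGraph V} {k : ℕ} (hk : 3 ≤ k)
      (iso : Nonempty (G ≃g SimpleGraph.cycleGraph k)) : G.IsSucculent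
  | vertexAttach {V : Type} {G : SimpleGraph V} (v : V) {m : ℕ} (hm : 2 ≤ m)
      {W : Type} {H : SimpleGraph W} (iso : Nonempty (H ≃g G.vertexAttach v m)) :
      G.IsSucculent → H.IsSucculent
  | edgeAttach {V : Type} {G : SimpleGraph V} {u v : V} (huv : G.Adj u v)
      {m : ℕ} (hm : 1 ≤ m) {W : Type} {H : SimpleGraph W}
      (iso : Nonempty (H ≃g G.pathExtend u v m)) :
      G.IsSucculent → H.IsSucculent

/-- `G` is 2-connected: it is connected, has at least three vertices, and deleting any
single vertex leaves a connected graph. -/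
def SimpleGraph.TwoConnected {V : Type} (G : SimpleGraph V) : Prop :=
  G.Connected ∧ 3 ≤ Nat.card V ∧ ∀ v : V, (G.induce {u : V | u ≠ v}).Connected

section Aux
open Sum

variable {α : Type*}

lemma reachable_ind {H : SimpleGraph α} (P : α → Prop)
    (hP : ∀ {a b}, H.Adj a b → P a → P b) {x y : α} (h : H.Reachable x y) (hx : P x) : P y := by
  obtain ⟨w⟩ := h
  induction w with
  | nil => exact hx
  | cons h _ ih => exact ih (hP h hx)

lemma connected_of_reachable_base {H : SimpleGraph α} (b : α)
    (h : ∀ a, H.Reachable a b) : H.Connected := by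
  rw [SimpleGraph.connected_iff_exists_forall_reachable]
  exact ⟨b, fun w => (h w).symm⟩

variable {V : Type} {G : SimpleGraph V} {u v : V} {m : ℕ}

lemma pathExtend_adj_inl {x y : V} :
    (G.pathExtend u v m).Adj (inl x) (inl y) ↔ G.Adj x y := by
  simp only [SimpleGraph.pathExtend, SimpleGraph.fromRel_adj]
  constructor
  · rintro ⟨hne, h | h⟩ <;>
      rcases h with ⟨a, b, ha, hb, hab⟩ | ⟨i, ha, hb, _⟩ | ⟨i, j, ha, hb, _⟩ | ⟨i, ha, hb, _⟩ <;>
      simp_all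
    · exact hab.symm
  · intro h
    exact ⟨by simp [h.ne], Or.inl (Or.inl ⟨x, y, rfl, rfl, h⟩)⟩

lemma pathExtend_adj_u0 {i : Fin m} (hi : i.val = 0) :
    (G.pathExtend u v m).Adj (inl u) (inr i) := by
  simp only [SimpleGraph.pathExtend, SimpleGraph.fromRel_adj]
  exact ⟨by simp, Or.inl (Or.inr (Or.inl ⟨i, trivial, rfl, hi⟩))⟩

lemma pathExtend_adj_last {i : Fin m} (hi : i.val = m - 1) :
    (G.pathExtend u v m).Adj (inr i) (inl v) := by
  simp only [SimpleGraph.pathExtend, SimpleGraph.fromRel_adj]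
  exact ⟨by simp, Or.inl (Or.inr (Or.inr (Or.inr ⟨i, rfl, trivial, hi⟩)))⟩

lemma pathExtend_adj_inr {i j : Fin m} (hij : j.val = i.val + 1) :
    (G.pathExtend u v m).Adj (inr i) (inr j) := by
  simp only [SimpleGraph.pathExtend, SimpleGraph.fromRel_adj]
  refine ⟨by simp [Fin.ext_iff]; omega, Or.inl (Or.inr (Or.inr (Or.inl ⟨i, j, rfl, rfl, hij⟩)))⟩

lemma pathExtend_adj_inr_inl {i : Fin m} {x : V} (h : (G.pathExtend u v m).Adj (inr i) (inl x)) :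
    x = u ∨ x = v := by
  simp only [SimpleGraph.pathExtend, SimpleGraph.fromRel_adj] at h
  rcases h with ⟨-, h | h⟩ <;>
    rcases h with ⟨a, b, ha, hb, hab⟩ | ⟨j, ha, hb, _⟩ | ⟨j, l, ha, hb, _⟩ | ⟨j, ha, hb, _⟩ <;>
    simp_all

lemma vertexAttach_adj_inr_inl {i : Fin m} {x : V}
    (h : (G.vertexAttach v m).Adj (inr i) (inl x)) : x = v := by
  simp only [SimpleGraph.vertexAttach, SimpleGraph.fromRel_adj] at h
  rcases h with ⟨-, h | h⟩ <;>
    rcases h with ⟨a, b, ha, hb, hab⟩ | ⟨j, ha, hb, _⟩ | ⟨j, l, ha, hb, _⟩ <;>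
    simp_all

lemma vertexAttach_adj_inl {x y : V} :
    (G.vertexAttach v m).Adj (inl x) (inl y) ↔ G.Adj x y := by
  simp only [SimpleGraph.vertexAttach, SimpleGraph.fromRel_adj]
  constructor
  · rintro ⟨hne, h | h⟩ <;>
      rcases h with ⟨a, b, ha, hb, hab⟩ | ⟨i, ha, hb, _⟩ | ⟨i, j, ha, hb, _⟩ <;>
      simp_all
    · exact hab.symm
  · intro h
    exact ⟨by simp [h.ne], Or.inl (Or.inl ⟨x, y, rfl, rfl, h⟩)⟩

end Aux
section Chains
open Sum

lemma induce_adj' {α : Type*} {H : SimpleGraph α} {s : Set α} {a b : α} (ha : a ∈ s) (hb : b ∈ s)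
    (h : H.Adj a b) : (H.induce s).Adj ⟨a, ha⟩ ⟨b, hb⟩ := by
  simpa using h

variable {V : Type} {G : SimpleGraph V} {u v : V} {m : ℕ}

lemma reach_down {s : Set (V ⊕ Fin m)} (hu : Sum.inl u ∈ s) (k : ℕ) :
    ∀ (i : Fin m), i.val = k → ∀ hs : ∀ j : Fin m, j.val ≤ i.val → Sum.inr j ∈ s,
      ((G.pathExtend u v m).induce s).Reachable ⟨Sum.inr i, hs i le_rfl⟩ ⟨Sum.inl u, hu⟩ := by
  induction k with
  | zero =>
    intro i hi hs
    exact ((induce_adj' hu (hs i le_rfl) (pathExtend_adj_u0 hi)).symm).reachable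
  | succ k ih =>
    intro i hi hs
    have hk : k < m := by omega
    have hadj := induce_adj' (H := G.pathExtend u v m) (hs ⟨k, hk⟩ (by simp; omega)) (hs i le_rfl)
      (pathExtend_adj_inr (i := ⟨k, hk⟩) (j := i) (by simp [hi]))
    exact hadj.symm.reachable.trans (ih ⟨k, hk⟩ rfl (fun j hj => hs j (by simp at hj ⊢; omega)))

lemma reach_up {s : Set (V ⊕ Fin m)} (hv : Sum.inl v ∈ s) (k : ℕ) :
    ∀ (i : Fin m), m - 1 - i.val = k → ∀ hs : ∀ j : Fin m, i.val ≤ j.val → Sum.inr j ∈ s,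
      ((G.pathExtend u v m).induce s).Reachable ⟨Sum.inr i, hs i le_rfl⟩ ⟨Sum.inl v, hv⟩ := by
  induction k with
  | zero =>
    intro i hi hs
    have : i.val = m - 1 := by have := i.isLt; omega
    exact (induce_adj' (hs i le_rfl) hv (pathExtend_adj_last this)).reachable
  | succ k ih =>
    intro i hi hs
    have hk : i.val + 1 < m := by have := i.isLt; omega
    have hadj := induce_adj' (H := G.pathExtend u v m) (hs i le_rfl) (hs ⟨i.val + 1, hk⟩ (by simp))
      (pathExtend_adj_inr (i := i) (j := ⟨i.val + 1, hk⟩) rfl)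
    exact hadj.reachable.trans (ih ⟨i.val + 1, hk⟩ (by simp; omega)
      (fun j hj => hs j (by simp at hj; omega)))

end Chains
section TwoConn
open Sum

variable {V : Type} {m : ℕ}

lemma mem_ne_inl {c w : V} (h : w ≠ c) :
    (Sum.inl w : V ⊕ Fin m) ∈ {a : V ⊕ Fin m | a ≠ Sum.inl c} :=
  fun hh => h (Sum.inl.inj hh)

lemma mem_inr_ne_inl {c : V} (i : Fin m) :
    (Sum.inr i : V ⊕ Fin m) ∈ {a : V ⊕ Fin m | a ≠ Sum.inl c} :=
  fun hh => nomatch hh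

lemma mem_inl_ne_inr {t : Fin m} (w : V) :
    (Sum.inl w : V ⊕ Fin m) ∈ {a : V ⊕ Fin m | a ≠ Sum.inr t} :=
  fun hh => nomatch hh

lemma mem_inr_ne_inr {t i : Fin m} (h : i ≠ t) :
    (Sum.inr i : V ⊕ Fin m) ∈ {a : V ⊕ Fin m | a ≠ Sum.inr t} :=
  fun hh => h (Sum.inr.inj hh)

lemma pathExtend_twoConnected {G : SimpleGraph V} {u v : V} (huv : G.Adj u v)
    (hm : 1 ≤ m) (hG : G.TwoConnected) : (G.pathExtend u v m).TwoConnected := by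
  obtain ⟨hc, hcard, hdel⟩ := hG
  have hFin : Finite V := Nat.finite_of_card_ne_zero (by omega)
  refine ⟨?_, ?_, ?_⟩
  · have hconn : ((G.pathExtend u v m).induce Set.univ).Connected := by
      apply connected_of_reachable_base ⟨Sum.inl u, Set.mem_univ _⟩
      rintro ⟨a, -⟩
      obtain w | i := a
      · have hr : G.Reachable w u := hc.preconnected w u
        let f : G →g (G.pathExtend u v m).induce Set.univ :=
          ⟨fun x => ⟨Sum.inl x, Set.mem_univ _⟩,
           fun h => induce_adj' (Set.mem_univ _) (Set.mem_univ _) (pathExtend_adj_inl.mpr h)⟩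
        exact hr.map f
      · exact reach_down (Set.mem_univ _) i.val i rfl (fun j _ => Set.mem_univ _)
    exact hconn.map (SimpleGraph.induceUnivIso (G.pathExtend u v m)).toHom
      (SimpleGraph.induceUnivIso (G.pathExtend u v m)).toEquiv.surjective
  · rw [Nat.card_sum]
    simp only [Nat.card_eq_fintype_card, Fintype.card_fin]
    omega
  · intro x
    obtain c | t := x
    · by_cases hcu : c = u
      · subst hcu
        have hv := mem_ne_inl (m := m) huv.ne'
        apply connected_of_reachable_base ⟨Sum.inl v, hv⟩
        rintro ⟨a, ha⟩
        obtain w | i := a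
        · have hw : w ≠ c := fun h => ha (by rw [h])
          have hr := (hdel c).preconnected ⟨w, hw⟩ ⟨v, huv.ne'⟩
          let f : G.induce {t : V | t ≠ c} →g
              (G.pathExtend c v m).induce {a : V ⊕ Fin m | a ≠ Sum.inl c} :=
            ⟨fun x => ⟨Sum.inl x.1, mem_ne_inl x.2⟩,
             fun {a b} h => induce_adj' (mem_ne_inl a.2) (mem_ne_inl b.2)
               (pathExtend_adj_inl.mpr (by simpa using h))⟩
          exact hr.map f
        · exact reach_up hv (m - 1 - i.val) i rfl (fun j _ => mem_inr_ne_inl j)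
      · have hu := mem_ne_inl (m := m) (fun h : u = c => hcu h.symm)
        apply connected_of_reachable_base ⟨Sum.inl u, hu⟩
        rintro ⟨a, ha⟩
        obtain w | i := a
        · have hw : w ≠ c := fun h => ha (by rw [h])
          have hr := (hdel c).preconnected ⟨w, hw⟩ ⟨u, fun h => hcu h.symm⟩
          let f : G.induce {t : V | t ≠ c} →g
              (G.pathExtend u v m).induce {a : V ⊕ Fin m | a ≠ Sum.inl c} :=
            ⟨fun x => ⟨Sum.inl x.1, mem_ne_inl x.2⟩,
             fun {a b} h => induce_adj' (mem_ne_inl a.2) (mem_ne_inl b.2)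
               (pathExtend_adj_inl.mpr (by simpa using h))⟩
          exact hr.map f
        · exact reach_down hu i.val i rfl (fun j _ => mem_inr_ne_inl j)
    · have hu := mem_inl_ne_inr (t := t) u
      have hv := mem_inl_ne_inr (t := t) v
      apply connected_of_reachable_base ⟨Sum.inl u, hu⟩
      rintro ⟨a, ha⟩
      obtain w | i := a
      · have hr : G.Reachable w u := hc.preconnected w u
        let f : G →g (G.pathExtend u v m).induce {a : V ⊕ Fin m | a ≠ Sum.inr t} :=
          ⟨fun x => ⟨Sum.inl x, mem_inl_ne_inr x⟩,
           fun h => induce_adj' (mem_inl_ne_inr _) (mem_inl_ne_inr _)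
             (pathExtend_adj_inl.mpr h)⟩
        exact hr.map f
      · have hit : i ≠ t := fun h => ha (by rw [h])
        rcases lt_or_gt_of_ne (fun h => hit (Fin.ext h)) with hlt | hgt
        · exact reach_down hu i.val i rfl
            (fun j hj => mem_inr_ne_inr (fun h => by subst h; omega))
        · exact (reach_up hv (m - 1 - i.val) i rfl
            (fun j hj => mem_inr_ne_inr (fun h => by subst h; omega))).trans
            (induce_adj' hv hu (pathExtend_adj_inl.mpr huv.symm)).reachable

end TwoConn
section Cycle
open SimpleGraph

open Fin.NatCast Fin.CommRing in
lemma cycleGraph_induce_connected {n : ℕ} (x : Fin (n + 3)) :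
    ((SimpleGraph.cycleGraph (n + 3)).induce {u | u ≠ x}).Connected := by
  have hmem : ∀ d : ℕ, d + 1 ≤ n + 2 → x + ((d + 1 : ℕ) : Fin (n + 3)) ∈ {u | u ≠ x} := by
    intro d hd
    simp only [Set.mem_setOf_eq, ne_eq, add_eq_left]
    intro h
    simp only [Fin.ext_iff, Fin.val_natCast, Fin.val_zero] at h
    rw [Nat.mod_eq_of_lt (by omega)] at h
    omega
  have h1 : (x + ((0 + 1 : ℕ) : Fin (n + 3))) ∈ {u | u ≠ x} := hmem 0 (by omega)
  have key : ∀ d : ℕ, (hd : d + 1 ≤ n + 2) →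
      ((SimpleGraph.cycleGraph (n + 3)).induce {u | u ≠ x}).Reachable
        ⟨x + ((d + 1 : ℕ) : Fin (n + 3)), hmem d hd⟩ ⟨x + ((0 + 1 : ℕ) : Fin (n + 3)), h1⟩ := by
    intro d
    induction d with
    | zero => intro _; rfl
    | succ d ih =>
      intro hd
      have hadj : (SimpleGraph.cycleGraph (n + 3)).Adj
          (x + ((d + 1 + 1 : ℕ) : Fin (n + 3))) (x + ((d + 1 : ℕ) : Fin (n + 3))) := by
        refine (SimpleGraph.cycleGraph_adj (n := n + 1)).mpr (Or.inl ?_)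
        push_cast
        ring
      exact (induce_adj' (hmem (d + 1) hd) (hmem d (by omega)) hadj).reachable.trans
        (ih (by omega))
  apply connected_of_reachable_base ⟨x + ((0 + 1 : ℕ) : Fin (n + 3)), h1⟩
  rintro ⟨u, hu⟩
  have hne : (u - x) ≠ 0 := fun h => hu (by simpa [sub_eq_zero] using h)
  have hval : (u - x).val ≠ 0 := fun h => hne (Fin.ext h)
  obtain ⟨d, hd⟩ : ∃ d, (u - x).val = d + 1 := ⟨(u - x).val - 1, by omega⟩
  have hdle : d + 1 ≤ n + 2 := by have := (u - x).isLt; omega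
  have hux : u = x + ((d + 1 : ℕ) : Fin (n + 3)) := by
    rw [← hd, Fin.cast_val_eq_self]
    ring
  have hsub : (⟨u, hu⟩ : {u : Fin (n + 3) | u ≠ x}) =
      ⟨x + ((d + 1 : ℕ) : Fin (n + 3)), hmem d hdle⟩ := Subtype.ext hux
  rw [hsub]
  exact key d hdle

lemma cycleGraph_twoConnected {k : ℕ} (hk : 3 ≤ k) :
    (SimpleGraph.cycleGraph k).TwoConnected := by
  obtain ⟨n, rfl⟩ : ∃ n, k = n + 3 := ⟨k - 3, by omega⟩
  refine ⟨SimpleGraph.cycleGraph_connected, by simp, cycleGraph_induce_connected⟩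

lemma twoConnected_of_iso {V W : Type} {G : SimpleGraph V} {H : SimpleGraph W}
    (e : G ≃g H) (hG : G.TwoConnected) : H.TwoConnected := by
  obtain ⟨hc, hcard, hdel⟩ := hG
  refine ⟨hc.map e.toHom e.toEquiv.surjective,
    by rwa [← Nat.card_congr e.toEquiv], ?_⟩
  intro w
  let f : G.induce {t | t ≠ e.symm w} →g H.induce {t | t ≠ w} :=
    ⟨fun a => ⟨e a.1, fun hh => a.2 (by simpa using congrArg e.symm hh)⟩,
     fun {a b} hadj => induce_adj' _ _ (e.map_rel_iff.mpr (by simpa using hadj))⟩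
  apply (hdel (e.symm w)).map f
  rintro ⟨b, hb⟩
  refine ⟨⟨e.symm b, fun hh => hb (by simpa using congrArg e hh)⟩, ?_⟩
  exact Subtype.ext (e.apply_symm_apply b)

lemma IsPolygonal2Tree.of_iso {V W : Type} {G : SimpleGraph V} {H : SimpleGraph W}
    (e : G ≃g H) (h : G.IsPolygonal2Tree) : H.IsPolygonal2Tree := by
  cases h with
  | cycle hk iso => exact .cycle hk ⟨e.symm.trans iso.some⟩
  | extend huv hm iso hp => exact .extend huv hm ⟨e.symm.trans iso.some⟩ hp

lemma IsPolygonal2Tree.twoConnected' : ∀ {V : Type} {G : SimpleGraph V},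
    G.IsPolygonal2Tree → G.TwoConnected := by
  intro V G h
  induction h with
  | cycle hk iso => exact twoConnected_of_iso iso.some.symm (cycleGraph_twoConnected hk)
  | extend huv hm iso _ ih =>
    exact twoConnected_of_iso iso.some.symm (pathExtend_twoConnected huv hm ih)

end Cycle
section Sep
open Sum

def IsSep {V : Type} (G : SimpleGraph V) (x : V) (A B : Set V) : Prop :=
  A.Nonempty ∧ B.Nonempty ∧ (∀ a ∈ A, a ≠ x) ∧ (∀ b ∈ B, b ≠ x) ∧
    (∀ w, w ≠ x → w ∈ A ∨ w ∈ B) ∧ (∀ a ∈ A, a ∉ B) ∧ (∀ a ∈ A, ∀ b ∈ B, ¬ G.Adj a b)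

def HasSep {V : Type} (G : SimpleGraph V) : Prop :=
  ∃ x A B, IsSep G x A B

lemma IsSep.swap {V : Type} {G : SimpleGraph V} {x : V} {A B : Set V}
    (h : IsSep G x A B) : IsSep G x B A := by
  obtain ⟨hA, hB, hAx, hBx, hcov, hdisj, hnadj⟩ := h
  refine ⟨hB, hA, hBx, hAx, fun w hw => (hcov w hw).symm,
    fun b hb hbA => hdisj b hbA hb,
    fun b hb a ha hadj => hnadj a ha b hb hadj.symm⟩

lemma HasSep.not_twoConnected {V : Type} {G : SimpleGraph V} (h : HasSep G) :
    ¬ G.TwoConnected := by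
  obtain ⟨x, A, B, ⟨a, haA⟩, ⟨b, hbB⟩, hAx, hBx, hcov, hdisj, hnadj⟩ := h
  rintro ⟨-, -, hdel⟩
  have hr := (hdel x).preconnected ⟨a, hAx a haA⟩ ⟨b, hBx b hbB⟩
  have hb : b ∈ A := by
    refine reachable_ind (fun c : {u : V | u ≠ x} => (c : V) ∈ A) ?_ hr haA
    rintro ⟨c, hc⟩ ⟨d, hd⟩ hadj hcA
    have hcd : G.Adj c d := by simpa using hadj
    rcases hcov d hd with h | h
    · exact h
    · exact absurd hcd (hnadj c hcA d h)
  exact hdisj b hb hbB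

lemma HasSep.of_iso {V W : Type} {G : SimpleGraph V} {H : SimpleGraph W} (e : G ≃g H)
    (h : HasSep G) : HasSep H := by
  obtain ⟨x, A, B, hA, hB, hAx, hBx, hcov, hdisj, hnadj⟩ := h
  refine ⟨e x, e '' A, e '' B, hA.image e, hB.image e, ?_, ?_, ?_, ?_, ?_⟩
  · rintro _ ⟨a, ha, rfl⟩ hh; exact hAx a ha (e.toEquiv.injective hh)
  · rintro _ ⟨b, hb, rfl⟩ hh; exact hBx b hb (e.toEquiv.injective hh)
  · intro w hw
    rcases hcov (e.symm w) (fun hh => hw (by rw [← hh]; simp)) with h | h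
    · exact Or.inl ⟨e.symm w, h, by simp⟩
    · exact Or.inr ⟨e.symm w, h, by simp⟩
  · rintro _ ⟨a, ha, rfl⟩ ⟨b, hb, hba⟩
    exact hdisj a ha (e.toEquiv.injective hba ▸ hb)
  · rintro _ ⟨a, ha, rfl⟩ _ ⟨b, hb, rfl⟩ hadj
    exact hnadj a ha b hb (e.map_rel_iff.mp hadj)

lemma vertexAttach_hasSep {V : Type} [Nontrivial V] {G : SimpleGraph V} (v : V) {m : ℕ}
    (hm : 1 ≤ m) : HasSep (G.vertexAttach v m) := by
  obtain ⟨w, hw⟩ := exists_ne v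
  refine ⟨Sum.inl v, Set.range Sum.inr, Sum.inl '' {t | t ≠ v},
    ⟨Sum.inr ⟨0, by omega⟩, ⟨_, rfl⟩⟩, ⟨Sum.inl w, ⟨w, hw, rfl⟩⟩, ?_, ?_, ?_, ?_, ?_⟩
  · rintro _ ⟨i, rfl⟩ h; exact nomatch h
  · rintro _ ⟨t, ht, rfl⟩ h; exact ht (Sum.inl.inj h)
  · rintro (t | i) h
    · exact Or.inr ⟨t, fun hh => h (by rw [hh]), rfl⟩
    · exact Or.inl ⟨i, rfl⟩
  · rintro _ ⟨i, rfl⟩ ⟨t, ht, h⟩; exact nomatch h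
  · rintro _ ⟨i, rfl⟩ _ ⟨t, ht, rfl⟩ hadj
    exact ht (vertexAttach_adj_inr_inl hadj)

lemma IsSep.pathExtend_core {V : Type} {G : SimpleGraph V} {u v x : V} {A B : Set V} (m : ℕ)
    (h : IsSep G x A B) (hu : u ≠ x → u ∈ A) (hv : v ≠ x → v ∈ A) :
    IsSep (G.pathExtend u v m) (Sum.inl x)
      (Sum.inl '' A ∪ Set.range Sum.inr) (Sum.inl '' B) := by
  obtain ⟨⟨a0, ha0⟩, ⟨b0, hb0⟩, hAx, hBx, hcov, hdisj, hnadj⟩ := h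
  refine ⟨⟨Sum.inl a0, Or.inl ⟨a0, ha0, rfl⟩⟩, ⟨Sum.inl b0, ⟨b0, hb0, rfl⟩⟩, ?_, ?_, ?_, ?_, ?_⟩
  · rintro _ (⟨a, ha, rfl⟩ | ⟨i, rfl⟩) hh
    · exact hAx a ha (Sum.inl.inj hh)
    · exact nomatch hh
  · rintro _ ⟨b, hb, rfl⟩ hh
    exact hBx b hb (Sum.inl.inj hh)
  · rintro (t | i) hh
    · rcases hcov t (fun h => hh (by rw [h])) with h | h
      · exact Or.inl (Or.inl ⟨t, h, rfl⟩)
      · exact Or.inr ⟨t, h, rfl⟩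
    · exact Or.inl (Or.inr ⟨i, rfl⟩)
  · rintro _ (⟨a, ha, rfl⟩ | ⟨i, rfl⟩) ⟨b, hb, hh⟩
    · exact hdisj a ha (Sum.inl.inj hh ▸ hb)
    · exact nomatch hh
  · rintro _ (⟨a, ha, rfl⟩ | ⟨i, rfl⟩) _ ⟨b, hb, rfl⟩ hadj
    · exact hnadj a ha b hb (pathExtend_adj_inl.mp hadj)
    · rcases pathExtend_adj_inr_inl hadj with rfl | rfl
      · exact hdisj b (hu (hBx b hb)) hb
      · exact hdisj b (hv (hBx b hb)) hb

lemma HasSep.pathExtend {V : Type} {G : SimpleGraph V} {u v : V} (huv : G.Adj u v) (m : ℕ)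
    (h : HasSep G) : HasSep (G.pathExtend u v m) := by
  obtain ⟨x, A, B, hs⟩ := h
  have hkey : (∀ w, w ≠ x → w ∈ A ∨ w ∈ B) := hs.2.2.2.2.1
  have hnadj := hs.2.2.2.2.2.2
  have : (u ≠ x → u ∈ A) ∧ (v ≠ x → v ∈ A) ∨ (u ≠ x → u ∈ B) ∧ (v ≠ x → v ∈ B) := by
    by_cases hux : u = x
    · subst hux
      have hvx : v ≠ u := huv.ne'
      rcases hkey v hvx with h | h
      · exact Or.inl ⟨fun h => absurd rfl h, fun _ => h⟩
      · exact Or.inr ⟨fun h => absurd rfl h, fun _ => h⟩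
    · rcases hkey u hux with h | h
      · refine Or.inl ⟨fun _ => h, fun hvx => ?_⟩
        rcases hkey v hvx with h' | h'
        · exact h'
        · exact absurd huv (hnadj u h v h')
      · refine Or.inr ⟨fun _ => h, fun hvx => ?_⟩
        rcases hkey v hvx with h' | h'
        · exact absurd huv.symm (hnadj v h' u h)
        · exact h'
  rcases this with ⟨h1, h2⟩ | ⟨h1, h2⟩
  · exact ⟨_, _, _, hs.pathExtend_core m h1 h2⟩
  · exact ⟨_, _, _, hs.swap.pathExtend_core m h1 h2⟩

lemma IsSep.vertexAttach_core {V : Type} {G : SimpleGraph V} {v x : V} {A B : Set V} (m : ℕ)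
    (h : IsSep G x A B) (hv : v ≠ x → v ∈ A) :
    IsSep (G.vertexAttach v m) (Sum.inl x)
      (Sum.inl '' A ∪ Set.range Sum.inr) (Sum.inl '' B) := by
  obtain ⟨⟨a0, ha0⟩, ⟨b0, hb0⟩, hAx, hBx, hcov, hdisj, hnadj⟩ := h
  refine ⟨⟨Sum.inl a0, Or.inl ⟨a0, ha0, rfl⟩⟩, ⟨Sum.inl b0, ⟨b0, hb0, rfl⟩⟩, ?_, ?_, ?_, ?_, ?_⟩
  · rintro _ (⟨a, ha, rfl⟩ | ⟨i, rfl⟩) hh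
    · exact hAx a ha (Sum.inl.inj hh)
    · exact nomatch hh
  · rintro _ ⟨b, hb, rfl⟩ hh
    exact hBx b hb (Sum.inl.inj hh)
  · rintro (t | i) hh
    · rcases hcov t (fun h => hh (by rw [h])) with h | h
      · exact Or.inl (Or.inl ⟨t, h, rfl⟩)
      · exact Or.inr ⟨t, h, rfl⟩
    · exact Or.inl (Or.inr ⟨i, rfl⟩)
  · rintro _ (⟨a, ha, rfl⟩ | ⟨i, rfl⟩) ⟨b, hb, hh⟩
    · exact hdisj a ha (Sum.inl.inj hh ▸ hb)
    · exact nomatch hh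
  · rintro _ (⟨a, ha, rfl⟩ | ⟨i, rfl⟩) _ ⟨b, hb, rfl⟩ hadj
    · exact hnadj a ha b hb (vertexAttach_adj_inl.mp hadj)
    · rcases vertexAttach_adj_inr_inl hadj with rfl
      exact hdisj b (hv (hBx b hb)) hb

lemma HasSep.vertexAttach {V : Type} {G : SimpleGraph V} (v : V) (m : ℕ)
    (h : HasSep G) : HasSep (G.vertexAttach v m) := by
  obtain ⟨x, A, B, hs⟩ := h
  by_cases hvx : v = x
  · exact ⟨_, _, _, hs.vertexAttach_core m (fun h => absurd hvx h)⟩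
  · rcases hs.2.2.2.2.1 v hvx with h | h
    · exact ⟨_, _, _, hs.vertexAttach_core m (fun _ => h)⟩
    · exact ⟨_, _, _, hs.swap.vertexAttach_core m (fun _ => h)⟩

end Sep

section Final

lemma IsSucculent.two_le_card : ∀ {V : Type} {G : SimpleGraph V},
    G.IsSucculent → 2 ≤ Nat.card V := by
  intro V G h
  induction h with
  | cycle hk iso =>
    rw [Nat.card_congr iso.some.toEquiv]
    simpa using by omega
  | @vertexAttach V' G' v m hm W H iso _ ih =>
    rw [Nat.card_congr iso.some.toEquiv]
    have : Finite V' := Nat.finite_of_card_ne_zero (by omega)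
    rw [Nat.card_sum]
    omega
  | @edgeAttach V' G' u v huv m hm W H iso _ ih =>
    rw [Nat.card_congr iso.some.toEquiv]
    have : Finite V' := Nat.finite_of_card_ne_zero (by omega)
    rw [Nat.card_sum]
    omega

lemma IsSucculent.polygonal_or_hasSep : ∀ {V : Type} {G : SimpleGraph V},
    G.IsSucculent → G.IsPolygonal2Tree ∨ HasSep G := by
  intro V G h
  induction h with
  | cycle hk iso => exact Or.inl (.cycle hk iso)
  | @vertexAttach V G v m hm W H iso hs ih =>
    right
    have hc2 := IsSucculent.two_le_card hs
    have : Finite V := Nat.finite_of_card_ne_zero (by omega)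
    have : Nontrivial V := Finite.one_lt_card_iff_nontrivial.mp (by omega)
    exact (vertexAttach_hasSep v (by omega)).of_iso iso.some.symm
  | @edgeAttach V G u v huv m hm W H iso hs ih =>
    rcases ih with hp | hsep
    · exact Or.inl (.extend huv hm iso hp)
    · exact Or.inr ((hsep.pathExtend huv m).of_iso iso.some.symm)

end Final


/-- A succulent is a polygonal 2-tree if and only if it is 2-connected. -/
theorem succulent_polygonal2Tree_iff_twoConnected {V : Type} (G : SimpleGraph V)
    (h : G.IsSucculent) :
    G.IsPolygonal2Tree ↔ G.TwoConnected := by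
  constructor
  · exact fun hp => IsPolygonal2Tree.twoConnected' hp
  · intro h2
    rcases IsSucculent.polygonal_or_hasSep h with hp | hsep
    · exact hp
    · exact absurd h2 hsep.not_twoConnected
end

section
/- The number of simple graphs on the labeled vertex set {0,1,2,3,4} (i.e., Fin 5) that are polygonal 2-trees is exactly 142. -/
open SimpleGraph

/-! ### Decidability infrastructure -/

set_option maxHeartbeats 4000000
set_option maxRecDepth 100000

def gOf {n : ℕ} (l : List (Fin n × Fin n)) : SimpleGraph (Fin n) :=
  SimpleGraph.fromRel (fun a b => (a,b) ∈ l)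

instance instGOf {n : ℕ} (l : List (Fin n × Fin n)) : DecidableRel (gOf l).Adj := fun a b =>
  decidable_of_iff _ (SimpleGraph.fromRel_adj _ a b).symm

instance instComap {V W : Type} {G : SimpleGraph W} [DecidableRel G.Adj] (f : V → W) :
    DecidableRel (G.comap f).Adj := fun a b => inferInstanceAs (Decidable (G.Adj (f a) (f b)))

instance instPE {V : Type} [DecidableEq V] [Fintype V] {G : SimpleGraph V} [DecidableRel G.Adj]
    (u v : V) (m : ℕ) : DecidableRel (G.pathExtend u v m).Adj := fun a b => by
  letI drel : ∀ p q : V ⊕ Fin m, Decidable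
      ((∃ x y : V, p = Sum.inl x ∧ q = Sum.inl y ∧ G.Adj x y) ∨
       (∃ i : Fin m, p = Sum.inl u ∧ q = Sum.inr i ∧ i.val = 0) ∨
       (∃ i j : Fin m, p = Sum.inr i ∧ q = Sum.inr j ∧ j.val = i.val + 1) ∨
       (∃ i : Fin m, p = Sum.inr i ∧ q = Sum.inl v ∧ i.val = m - 1)) := fun p q =>
    inferInstance
  rw [SimpleGraph.pathExtend, SimpleGraph.fromRel_adj]
  exact instDecidableAnd (dq := instDecidableOr (dp := drel a b) (dq := drel b a))

instance dEqG {V : Type} [Fintype V] {G H : SimpleGraph V} [DecidableRel G.Adj]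
    [DecidableRel H.Adj] : Decidable (G = H) :=
  decidable_of_iff (∀ a b, G.Adj a b ↔ H.Adj a b)
    ⟨fun h => by ext a b; exact h a b, fun h a b => by rw [h]⟩

instance dIso {V W : Type} [Fintype V] [Fintype W] [DecidableEq V] [DecidableEq W]
    {G : SimpleGraph V} {H : SimpleGraph W} [DecidableRel G.Adj] [DecidableRel H.Adj] :
    Decidable (Nonempty (G ≃g H)) :=
  decidable_of_iff (∃ e : V ≃ W, ∀ a b, H.Adj (e a) (e b) ↔ G.Adj a b)
    ⟨fun ⟨e, h⟩ => ⟨⟨e, @fun a b => h a b⟩⟩, fun ⟨i⟩ => ⟨i.toEquiv, fun a b => i.map_rel_iff⟩⟩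

instance instCyc (n : ℕ) : DecidableRel (cycleGraph n).Adj := by
  unfold cycleGraph; exact match n with
  | 0 | 1 => fun a b => inferInstanceAs (Decidable False)
  | _+2 => fun a b => inferInstanceAs (Decidable (_ ∨ _))

/-! ### The concrete graphs -/

abbrev T3 : SimpleGraph (Fin 3) := gOf [(0,1),(1,2),(2,0)]
abbrev C4g : SimpleGraph (Fin 4) := gOf [(0,1),(1,2),(2,3),(3,0)]
abbrev D4g : SimpleGraph (Fin 4) := gOf [(0,1),(0,2),(1,2),(0,3),(1,3)]
abbrev C5g : SimpleGraph (Fin 5) := gOf [(0,1),(1,2),(2,3),(3,4),(4,0)]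
abbrev HOUSEg : SimpleGraph (Fin 5) := gOf [(0,1),(0,2),(1,2),(0,3),(3,4),(4,1)]
abbrev BOOKg : SimpleGraph (Fin 5) := gOf [(0,1),(0,2),(1,2),(0,3),(1,3),(0,4),(1,4)]
abbrev CHAINg : SimpleGraph (Fin 5) := gOf [(0,1),(0,2),(1,2),(1,3),(2,3),(2,4),(3,4)]

lemma cyc3_eq : cycleGraph 3 = T3 := by decide
lemma cyc4_eq : cycleGraph 4 = C4g := by decide
lemma cyc5_eq : cycleGraph 5 = C5g := by decide

/-! ### Small iso utilities -/

def isoOfEq {V : Type} {G H : SimpleGraph V} (h : G = H) : G ≃g H := by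
  subst h; exact RelIso.refl _

/-- comap of a graph along an equivalence is isomorphic to the original graph. -/
def isoComap {V W : Type} (f : V ≃ W) (G : SimpleGraph W) : G.comap ⇑f ≃g G :=
  ⟨f, Iff.rfl⟩

lemma eq_comap_of_iso {V W : Type} {G : SimpleGraph V} {H : SimpleGraph W} (e : G ≃g H) :
    G = H.comap ⇑e.toEquiv := by
  ext a b; exact e.map_rel_iff.symm

/-! ### Naturality of pathExtend -/

lemma pathExtend_congr {V V' : Type} {G : SimpleGraph V} {G' : SimpleGraph V'}
    (φ : G ≃g G') (u v : V) (m : ℕ) :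
    Nonempty (G.pathExtend u v m ≃g G'.pathExtend (φ u) (φ v) m) := by
  refine ⟨⟨Equiv.sumCongr φ.toEquiv (Equiv.refl (Fin m)), @fun a b => ?_⟩⟩
  have key : ∀ a b : V ⊕ Fin m,
      ((∃ x y : V', (Equiv.sumCongr φ.toEquiv (Equiv.refl (Fin m))) a = Sum.inl x ∧
          (Equiv.sumCongr φ.toEquiv (Equiv.refl (Fin m))) b = Sum.inl y ∧ G'.Adj x y) ∨
       (∃ i : Fin m, (Equiv.sumCongr φ.toEquiv (Equiv.refl (Fin m))) a = Sum.inl (φ u) ∧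
          (Equiv.sumCongr φ.toEquiv (Equiv.refl (Fin m))) b = Sum.inr i ∧ i.val = 0) ∨
       (∃ i j : Fin m, (Equiv.sumCongr φ.toEquiv (Equiv.refl (Fin m))) a = Sum.inr i ∧
          (Equiv.sumCongr φ.toEquiv (Equiv.refl (Fin m))) b = Sum.inr j ∧ j.val = i.val + 1) ∨
       (∃ i : Fin m, (Equiv.sumCongr φ.toEquiv (Equiv.refl (Fin m))) a = Sum.inr i ∧
          (Equiv.sumCongr φ.toEquiv (Equiv.refl (Fin m))) b = Sum.inl (φ v) ∧ i.val = m - 1)) ↔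
      ((∃ x y : V, a = Sum.inl x ∧ b = Sum.inl y ∧ G.Adj x y) ∨
       (∃ i : Fin m, a = Sum.inl u ∧ b = Sum.inr i ∧ i.val = 0) ∨
       (∃ i j : Fin m, a = Sum.inr i ∧ b = Sum.inr j ∧ j.val = i.val + 1) ∨
       (∃ i : Fin m, a = Sum.inr i ∧ b = Sum.inl v ∧ i.val = m - 1)) := by
    intro a b
    rcases a with x | i <;> rcases b with y | j <;>
      simp [Equiv.sumCongr_apply, Sum.map, φ.injective.eq_iff, φ.map_rel_iff,
        φ.toEquiv.injective.eq_iff]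
  simp only [SimpleGraph.pathExtend, SimpleGraph.fromRel_adj]
  rw [key a b, key b a, (Equiv.sumCongr φ.toEquiv (Equiv.refl (Fin m))).injective.ne_iff]

/-! ### Concrete extension lemmas -/

lemma extT3_1 : ∀ u v : Fin 3, T3.Adj u v → Nonempty ((T3.pathExtend u v 1) ≃g D4g) := by decide
lemma extT3_2 : ∀ u v : Fin 3, T3.Adj u v → Nonempty ((T3.pathExtend u v 2) ≃g HOUSEg) := by
  decide
lemma extC4 : ∀ u v : Fin 4, C4g.Adj u v → Nonempty ((C4g.pathExtend u v 1) ≃g HOUSEg) := by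
  decide
lemma extD4 : ∀ u v : Fin 4, D4g.Adj u v →
    (Nonempty ((D4g.pathExtend u v 1) ≃g BOOKg) ∨
     Nonempty ((D4g.pathExtend u v 1) ≃g CHAINg)) := by decide

/-! ### Classification of polygonal 2-trees on up to 5 vertices -/

def Cls {V : Type} (G : SimpleGraph V) : Prop :=
  (∃ n, 3 ≤ n ∧ Nonempty (V ≃ Fin n)) ∧
  (Nonempty (V ≃ Fin 3) → Nonempty (G ≃g T3)) ∧
  (Nonempty (V ≃ Fin 4) → Nonempty (G ≃g C4g) ∨ Nonempty (G ≃g D4g)) ∧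
  (Nonempty (V ≃ Fin 5) →
    Nonempty (G ≃g C5g) ∨ Nonempty (G ≃g HOUSEg) ∨ Nonempty (G ≃g BOOKg) ∨
      Nonempty (G ≃g CHAINg))

theorem classify {V : Type} {G : SimpleGraph V} (h : G.IsPolygonal2Tree) : Cls G := by
  induction h with
  | cycle hk iso =>
    rename_i V G k
    obtain ⟨e⟩ := iso
    refine ⟨⟨k, hk, ⟨e.toEquiv⟩⟩, ?_, ?_, ?_⟩
    · rintro ⟨f⟩
      have h3 : k = 3 := Fin.equiv_iff_eq.mp ⟨e.toEquiv.symm.trans f⟩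
      subst h3
      exact ⟨e.trans (isoOfEq cyc3_eq)⟩
    · rintro ⟨f⟩
      have h4 : k = 4 := Fin.equiv_iff_eq.mp ⟨e.toEquiv.symm.trans f⟩
      subst h4
      exact Or.inl ⟨e.trans (isoOfEq cyc4_eq)⟩
    · rintro ⟨f⟩
      have h5 : k = 5 := Fin.equiv_iff_eq.mp ⟨e.toEquiv.symm.trans f⟩
      subst h5
      exact Or.inl ⟨e.trans (isoOfEq cyc5_eq)⟩
  | extend huv hm iso h ih =>
    rename_i V G u v m W H
    obtain ⟨e⟩ := iso
    obtain ⟨⟨n, hn3, ⟨eV⟩⟩, ih3, ih4, _⟩ := ih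
    have eW : W ≃ Fin (n + m) :=
      e.toEquiv.trans ((eV.sumCongr (Equiv.refl (Fin m))).trans finSumFinEquiv)
    refine ⟨⟨n + m, by omega, ⟨eW⟩⟩, ?_, ?_, ?_⟩
    · rintro ⟨f⟩
      have : n + m = 3 := Fin.equiv_iff_eq.mp ⟨eW.symm.trans f⟩
      omega
    · rintro ⟨f⟩
      have hnm : n + m = 4 := Fin.equiv_iff_eq.mp ⟨eW.symm.trans f⟩
      have hn : n = 3 := by omega
      have hm1 : m = 1 := by omega
      subst hn; subst hm1
      obtain ⟨φ⟩ := ih3 ⟨eV⟩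
      have adj : T3.Adj (φ u) (φ v) := φ.map_rel_iff.mpr huv
      obtain ⟨ψ⟩ := pathExtend_congr φ u v 1
      obtain ⟨χ⟩ := extT3_1 (φ u) (φ v) adj
      exact Or.inr ⟨(e.trans ψ).trans χ⟩
    · rintro ⟨f⟩
      have hnm : n + m = 5 := Fin.equiv_iff_eq.mp ⟨eW.symm.trans f⟩
      rcases Nat.lt_or_ge n 4 with hn4 | hn4
      · -- n = 3, m = 2
        have hn : n = 3 := by omega
        have hm2 : m = 2 := by omega
        subst hn; subst hm2
        obtain ⟨φ⟩ := ih3 ⟨eV⟩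
        have adj : T3.Adj (φ u) (φ v) := φ.map_rel_iff.mpr huv
        obtain ⟨ψ⟩ := pathExtend_congr φ u v 2
        obtain ⟨χ⟩ := extT3_2 (φ u) (φ v) adj
        exact Or.inr (Or.inl ⟨(e.trans ψ).trans χ⟩)
      · -- n = 4, m = 1
        have hn : n = 4 := by omega
        have hm1 : m = 1 := by omega
        subst hn; subst hm1
        rcases ih4 ⟨eV⟩ with hC | hD
        · obtain ⟨φ⟩ := hC
          have adj : C4g.Adj (φ u) (φ v) := φ.map_rel_iff.mpr huv
          obtain ⟨ψ⟩ := pathExtend_congr φ u v 1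
          obtain ⟨χ⟩ := extC4 (φ u) (φ v) adj
          exact Or.inr (Or.inl ⟨(e.trans ψ).trans χ⟩)
        · obtain ⟨φ⟩ := hD
          have adj : D4g.Adj (φ u) (φ v) := φ.map_rel_iff.mpr huv
          obtain ⟨ψ⟩ := pathExtend_congr φ u v 1
          rcases extD4 (φ u) (φ v) adj with hB | hCh
          · obtain ⟨χ⟩ := hB
            exact Or.inr (Or.inr (Or.inl ⟨(e.trans ψ).trans χ⟩))
          · obtain ⟨χ⟩ := hCh
            exact Or.inr (Or.inr (Or.inr ⟨(e.trans ψ).trans χ⟩))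

/-! ### The four shapes are polygonal 2-trees -/

lemma poly_of_iso {V W : Type} {G : SimpleGraph V} {H : SimpleGraph W}
    (e : G ≃g H) (h : H.IsPolygonal2Tree) : G.IsPolygonal2Tree := by
  cases h with
  | cycle hk iso => exact .cycle hk ⟨e.trans iso.some⟩
  | extend huv hm iso h' => exact .extend huv hm ⟨e.trans iso.some⟩ h'

lemma T3_poly : T3.IsPolygonal2Tree :=
  .cycle (k := 3) le_rfl ⟨isoOfEq cyc3_eq.symm⟩

lemma D4_poly : D4g.IsPolygonal2Tree :=
  .extend (G := T3) (u := 0) (v := 1) (by decide) (m := 1) le_rfl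
    ⟨(extT3_1 0 1 (by decide)).some.symm⟩ T3_poly

lemma C5_poly : C5g.IsPolygonal2Tree :=
  .cycle (k := 5) (by norm_num) ⟨isoOfEq cyc5_eq.symm⟩

lemma HOUSE_poly : HOUSEg.IsPolygonal2Tree :=
  .extend (G := T3) (u := 0) (v := 1) (by decide) (m := 2) (by norm_num)
    ⟨(extT3_2 0 1 (by decide)).some.symm⟩ T3_poly

lemma bookIso : Nonempty ((D4g.pathExtend 0 1 1) ≃g BOOKg) := by decide
lemma chainIso : Nonempty ((D4g.pathExtend 0 2 1) ≃g CHAINg) := by decide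

lemma BOOK_poly : BOOKg.IsPolygonal2Tree :=
  .extend (G := D4g) (u := 0) (v := 1) (by decide) (m := 1) le_rfl
    ⟨bookIso.some.symm⟩ D4_poly

lemma CHAIN_poly : CHAINg.IsPolygonal2Tree :=
  .extend (G := D4g) (u := 0) (v := 2) (by decide) (m := 1) le_rfl
    ⟨chainIso.some.symm⟩ D4_poly

lemma poly_iff (G : SimpleGraph (Fin 5)) :
    G.IsPolygonal2Tree ↔
      Nonempty (G ≃g C5g) ∨ Nonempty (G ≃g HOUSEg) ∨ Nonempty (G ≃g BOOKg) ∨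
        Nonempty (G ≃g CHAINg) := by
  constructor
  · intro h; exact (classify h).2.2.2 ⟨Equiv.refl _⟩
  · rintro (h | h | h | h) <;> obtain ⟨e⟩ := h
    · exact poly_of_iso e C5_poly
    · exact poly_of_iso e HOUSE_poly
    · exact poly_of_iso e BOOK_poly
    · exact poly_of_iso e CHAIN_poly

/-! ### The group action and orbit counting -/

instance : SMul (Equiv.Perm (Fin 5)) (SimpleGraph (Fin 5)) :=
  ⟨fun σ G => G.comap ⇑σ⁻¹⟩

lemma smul_def (σ : Equiv.Perm (Fin 5)) (G : SimpleGraph (Fin 5)) :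
    σ • G = G.comap ⇑σ⁻¹ := rfl

instance : MulAction (Equiv.Perm (Fin 5)) (SimpleGraph (Fin 5)) where
  one_smul G := by
    ext a b; simp [smul_def, SimpleGraph.comap_adj]
  mul_smul σ τ G := by
    ext a b; simp [smul_def, SimpleGraph.comap_adj, mul_inv_rev, Equiv.Perm.mul_apply]

lemma mem_orbit_iff_iso {S G : SimpleGraph (Fin 5)} :
    G ∈ MulAction.orbit (Equiv.Perm (Fin 5)) S ↔ Nonempty (G ≃g S) := by
  constructor
  · rintro ⟨σ, rfl⟩
    show Nonempty (S.comap ⇑σ⁻¹ ≃g S)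
    exact ⟨isoComap σ⁻¹ S⟩
  · rintro ⟨e⟩
    refine ⟨(e.toEquiv : Equiv.Perm (Fin 5))⁻¹, ?_⟩
    show S.comap ⇑((e.toEquiv : Equiv.Perm (Fin 5))⁻¹)⁻¹ = G
    rw [inv_inv]
    exact (eq_comap_of_iso e).symm

lemma stabC5 : Fintype.card {σ : Equiv.Perm (Fin 5) // C5g.comap ⇑σ⁻¹ = C5g} = 10 := by decide
lemma stabHOUSE : Fintype.card {σ : Equiv.Perm (Fin 5) // HOUSEg.comap ⇑σ⁻¹ = HOUSEg} = 2 := by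
  decide
lemma stabBOOK : Fintype.card {σ : Equiv.Perm (Fin 5) // BOOKg.comap ⇑σ⁻¹ = BOOKg} = 12 := by
  decide
lemma stabCHAIN : Fintype.card {σ : Equiv.Perm (Fin 5) // CHAINg.comap ⇑σ⁻¹ = CHAINg} = 2 := by
  decide

lemma orbit_ncard (S : SimpleGraph (Fin 5)) [DecidableRel S.Adj] (c k : ℕ)
    (hc : Fintype.card {σ : Equiv.Perm (Fin 5) // S.comap ⇑σ⁻¹ = S} = c)
    (hkc : k * c = 120) (hc0 : 0 < c) :
    (MulAction.orbit (Equiv.Perm (Fin 5)) S).ncard = k := by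
  letI : Fintype ↥(MulAction.orbit (Equiv.Perm (Fin 5)) S) :=
    (Set.finite_range _).fintype
  letI : DecidablePred (· ∈ MulAction.stabilizer (Equiv.Perm (Fin 5)) S) := fun σ =>
    decidable_of_iff (S.comap ⇑σ⁻¹ = S) Iff.rfl
  have h := MulAction.card_orbit_mul_card_stabilizer_eq_card_group (Equiv.Perm (Fin 5)) S
  have hstab : Fintype.card ↥(MulAction.stabilizer (Equiv.Perm (Fin 5)) S) = c := by
    rw [← hc]
    exact Fintype.card_congr (Equiv.subtypeEquivRight (fun σ => Iff.rfl))
  have hperm : Fintype.card (Equiv.Perm (Fin 5)) = 120 := by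
    simp [Fintype.card_perm, Fintype.card_fin]; rfl
  rw [hstab, hperm] at h
  have horb : Fintype.card ↥(MulAction.orbit (Equiv.Perm (Fin 5)) S) = k :=
    Nat.eq_of_mul_eq_mul_right hc0 (h.trans hkc.symm)
  rw [Set.ncard_eq_toFinset_card', Set.toFinset_card, horb]

lemma nonisoCH : ¬ Nonempty (C5g ≃g HOUSEg) := by decide
lemma nonisoCB : ¬ Nonempty (C5g ≃g BOOKg) := by decide
lemma nonisoCC : ¬ Nonempty (C5g ≃g CHAINg) := by decide
lemma nonisoHB : ¬ Nonempty (HOUSEg ≃g BOOKg) := by decide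
lemma nonisoHC : ¬ Nonempty (HOUSEg ≃g CHAINg) := by decide
lemma nonisoBC : ¬ Nonempty (BOOKg ≃g CHAINg) := by decide

lemma orbit_disj {S T : SimpleGraph (Fin 5)} (h : ¬ Nonempty (S ≃g T)) :
    Disjoint (MulAction.orbit (Equiv.Perm (Fin 5)) S) (MulAction.orbit (Equiv.Perm (Fin 5)) T) := by
  rw [Set.disjoint_left]
  intro G hS hT
  obtain ⟨e1⟩ := mem_orbit_iff_iso.mp hS
  obtain ⟨e2⟩ := mem_orbit_iff_iso.mp hT
  exact h ⟨e1.symm.trans e2⟩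

/-! ### Main theorem -/

/-- The number of simple graphs on the labeled vertex set `Fin 5` that are polygonal
2-trees is exactly 142. -/
theorem card_labeled_polygonal2Trees_5 :
    Nat.card {G : SimpleGraph (Fin 5) // G.IsPolygonal2Tree} = 142 := by
  have hset : {G : SimpleGraph (Fin 5) | G.IsPolygonal2Tree} =
      MulAction.orbit (Equiv.Perm (Fin 5)) C5g ∪
        (MulAction.orbit (Equiv.Perm (Fin 5)) HOUSEg ∪
          (MulAction.orbit (Equiv.Perm (Fin 5)) BOOKg ∪
            MulAction.orbit (Equiv.Perm (Fin 5)) CHAINg)) := by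
    ext G
    simp only [Set.mem_setOf_eq, Set.mem_union, mem_orbit_iff_iso, poly_iff G, or_assoc]
  have hfinC : (MulAction.orbit (Equiv.Perm (Fin 5)) C5g).Finite := Set.finite_range _
  have hfinH : (MulAction.orbit (Equiv.Perm (Fin 5)) HOUSEg).Finite := Set.finite_range _
  have hfinB : (MulAction.orbit (Equiv.Perm (Fin 5)) BOOKg).Finite := Set.finite_range _
  have hfinC2 : (MulAction.orbit (Equiv.Perm (Fin 5)) CHAINg).Finite := Set.finite_range _
  have hcard : Nat.card {G : SimpleGraph (Fin 5) // G.IsPolygonal2Tree} =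
      ({G : SimpleGraph (Fin 5) | G.IsPolygonal2Tree}).ncard := rfl
  rw [hcard, hset]
  rw [Set.ncard_union_eq (by
        refine Set.disjoint_union_right.mpr ⟨orbit_disj nonisoCH, ?_⟩
        exact Set.disjoint_union_right.mpr ⟨orbit_disj nonisoCB, orbit_disj nonisoCC⟩)
      hfinC (hfinH.union (hfinB.union hfinC2)),
    Set.ncard_union_eq (Set.disjoint_union_right.mpr ⟨orbit_disj nonisoHB, orbit_disj nonisoHC⟩)
      hfinH (hfinB.union hfinC2),
    Set.ncard_union_eq (orbit_disj nonisoBC) hfinB hfinC2]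
  rw [orbit_ncard C5g 10 12 stabC5 (by norm_num) (by norm_num),
    orbit_ncard HOUSEg 2 60 stabHOUSE (by norm_num) (by norm_num),
    orbit_ncard BOOKg 12 10 stabBOOK (by norm_num) (by norm_num),
    orbit_ncard CHAINg 2 60 stabCHAIN (by norm_num) (by norm_num)]
end
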